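/- Let A, Ã be nonsingular n×n real matrices, W symmetric positive definite, E = AÃ⁻¹ − I, κ = κ₂(W). Assume ‖E‖₂ < (−(1+κ) + √((1+κ)² + 4κ)) / (2κ). Then κ(AᵀW⁻¹A, ÃᵀW⁻¹Ã) ≤ (1 + (1+κ)‖E‖₂ + κ‖E‖₂²) / (1 − (1+κ)‖E‖₂ − κ‖E‖₂²). -/

import Mathlib

open Matrix

/-- The spectral (operator 2-) norm of a real matrix. -/
noncomputable def specNorm {m : Type*} [Fintype m] [DecidableEq m]
    (A : Matrix m m ℝ) : ℝ :=
  ‖LinearMap.toContinuousLinearMap (Matrix.toEuclideanLin A)‖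

open scoped MatrixOrder in
noncomputable def Matrix.PosSemidef.sqrt {n : ℕ} {S : Matrix (Fin n) (Fin n) ℝ}
    (_hS : S.PosSemidef) : Matrix (Fin n) (Fin n) ℝ :=
  CFC.sqrt S

open scoped MatrixOrder in
theorem Matrix.PosSemidef.posSemidef_sqrt {n : ℕ} {S : Matrix (Fin n) (Fin n) ℝ}
    (hS : S.PosSemidef) : hS.sqrt.PosSemidef :=
  (CFC.sqrt_nonneg S).posSemidef

open scoped MatrixOrder in
theorem Matrix.PosSemidef.sqrt_mul_self {n : ℕ} {S : Matrix (Fin n) (Fin n) ℝ}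
    (hS : S.PosSemidef) : hS.sqrt * hS.sqrt = S :=
  CFC.sqrt_mul_sqrt_self S hS.nonneg

namespace Stmt6Aux

variable {n : ℕ}

lemma dot_self_nonneg (x : Fin n → ℝ) : 0 ≤ x ⬝ᵥ x :=
  Finset.sum_nonneg fun i _ => mul_self_nonneg _

lemma norm_sq_euclid (y : Fin n → ℝ) :
    ‖((WithLp.equiv 2 (Fin n → ℝ)).symm y : EuclideanSpace ℝ (Fin n))‖ ^ 2 = y ⬝ᵥ y := by
  rw [EuclideanSpace.norm_eq, Real.sq_sqrt (by positivity)]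
  simp [dotProduct, Real.norm_eq_abs, sq_abs, pow_two]

lemma mulVec_dot_le (A : Matrix (Fin n) (Fin n) ℝ) (x : Fin n → ℝ) :
    (A *ᵥ x) ⬝ᵥ (A *ᵥ x) ≤ specNorm A ^ 2 * (x ⬝ᵥ x) := by
  have h := (LinearMap.toContinuousLinearMap (Matrix.toEuclideanLin A)).le_opNorm
    ((WithLp.equiv 2 (Fin n → ℝ)).symm x)
  have hLv : (LinearMap.toContinuousLinearMap (Matrix.toEuclideanLin A))
      ((WithLp.equiv 2 (Fin n → ℝ)).symm x) =
      ((WithLp.equiv 2 (Fin n → ℝ)).symm (A *ᵥ x) : EuclideanSpace ℝ (Fin n)) := by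
    rfl
  rw [hLv] at h
  have h2 := pow_le_pow_left₀ (norm_nonneg _) h 2
  rw [norm_sq_euclid, mul_pow, norm_sq_euclid] at h2
  exact h2

lemma dot_sq_le (x y : Fin n → ℝ) : (x ⬝ᵥ y) ^ 2 ≤ (x ⬝ᵥ x) * (y ⬝ᵥ y) := by
  simpa [dotProduct, pow_two] using Finset.sum_mul_sq_le_sq_mul_sq Finset.univ x y

lemma dot_mulVec_le (S : Matrix (Fin n) (Fin n) ℝ) (x : Fin n → ℝ) :
    x ⬝ᵥ (S *ᵥ x) ≤ specNorm S * (x ⬝ᵥ x) := by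
  have h1 := dot_sq_le x (S *ᵥ x)
  have h2 := mulVec_dot_le S x
  have hx : 0 ≤ x ⬝ᵥ x := dot_self_nonneg x
  have hσ : 0 ≤ specNorm S := norm_nonneg _
  nlinarith [sq_nonneg (x ⬝ᵥ (S *ᵥ x) - specNorm S * (x ⬝ᵥ x)),
    sq_nonneg (x ⬝ᵥ (S *ᵥ x) + specNorm S * (x ⬝ᵥ x)), mul_nonneg hσ hx]

lemma mulVec_dot_mulVec (T : Matrix (Fin n) (Fin n) ℝ) (hT : Tᵀ = T) (a b : Fin n → ℝ) :
    (T *ᵥ a) ⬝ᵥ (T *ᵥ b) = a ⬝ᵥ ((T * T) *ᵥ b) := by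
  rw [dotProduct_mulVec, dotProduct_mulVec, vecMul_mulVec, hT]

lemma herm_transpose {M : Matrix (Fin n) (Fin n) ℝ} (h : M.IsHermitian) : Mᵀ = M := by
  rw [← Matrix.conjTranspose_eq_transpose_of_trivial]; exact h

lemma dot_sym_split {S : Matrix (Fin n) (Fin n) ℝ} (hS : S.PosSemidef) (a b : Fin n → ℝ) :
    a ⬝ᵥ (S *ᵥ b) = (hS.sqrt *ᵥ a) ⬝ᵥ (hS.sqrt *ᵥ b) := by
  rw [mulVec_dot_mulVec _ (herm_transpose hS.posSemidef_sqrt.1), hS.sqrt_mul_self]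

lemma psd_cauchy {S : Matrix (Fin n) (Fin n) ℝ} (hS : S.PosSemidef) (a b : Fin n → ℝ) :
    (a ⬝ᵥ (S *ᵥ b)) ^ 2 ≤ (a ⬝ᵥ (S *ᵥ a)) * (b ⬝ᵥ (S *ᵥ b)) := by
  rw [dot_sym_split hS a b, dot_sym_split hS a a, dot_sym_split hS b b]
  exact dot_sq_le _ _

lemma sqrt_isUnit_det {S : Matrix (Fin n) (Fin n) ℝ} (hS : S.PosDef) :
    IsUnit hS.posSemidef.sqrt.det := by
  have h1 : hS.posSemidef.sqrt.det * hS.posSemidef.sqrt.det = S.det := by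
    rw [← det_mul, hS.posSemidef.sqrt_mul_self]
  rw [isUnit_iff_ne_zero]
  intro h
  rw [h, mul_zero] at h1
  exact absurd h1.symm (ne_of_gt hS.det_pos)

lemma dot_le_specNorm_mul {W : Matrix (Fin n) (Fin n) ℝ} (hW : W.PosDef) (z : Fin n → ℝ) :
    z ⬝ᵥ z ≤ specNorm W * (z ⬝ᵥ (W⁻¹ *ᵥ z)) := by
  have hS : (W⁻¹).PosDef := hW.inv
  set R := hS.posSemidef.sqrt with hRdef
  have hRsym : Rᵀ = R := herm_transpose hS.posSemidef.posSemidef_sqrt.1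
  have hRR : R * R = W⁻¹ := hS.posSemidef.sqrt_mul_self
  have hdet : IsUnit R.det := sqrt_isUnit_det hS
  have hRinv : R⁻¹ * R = 1 := nonsing_inv_mul R hdet
  have hWdet : IsUnit W.det := isUnit_iff_ne_zero.mpr (ne_of_gt hW.det_pos)
  have hRRinvW : R⁻¹ * R⁻¹ = W := by
    rw [← Matrix.mul_inv_rev, hRR, Matrix.nonsing_inv_nonsing_inv W hWdet]
  have hz : R⁻¹ *ᵥ (R *ᵥ z) = z := by rw [mulVec_mulVec, hRinv, one_mulVec]
  have hsym_inv : (R⁻¹)ᵀ = R⁻¹ := by rw [transpose_nonsing_inv, hRsym]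
  have key : z ⬝ᵥ z = (R *ᵥ z) ⬝ᵥ (W *ᵥ (R *ᵥ z)) := by
    conv_lhs => rw [← hz]
    rw [mulVec_dot_mulVec _ hsym_inv, hRRinvW]
  have key2 : (R *ᵥ z) ⬝ᵥ (R *ᵥ z) = z ⬝ᵥ (W⁻¹ *ᵥ z) := by
    rw [mulVec_dot_mulVec _ hRsym, hRR]
  calc z ⬝ᵥ z = (R *ᵥ z) ⬝ᵥ (W *ᵥ (R *ᵥ z)) := key
    _ ≤ specNorm W * ((R *ᵥ z) ⬝ᵥ (R *ᵥ z)) := dot_mulVec_le W _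
    _ = specNorm W * (z ⬝ᵥ (W⁻¹ *ᵥ z)) := by rw [key2]

lemma specNorm_of_isEmpty [IsEmpty (Fin n)] (A : Matrix (Fin n) (Fin n) ℝ) :
    specNorm A = 0 := by
  have h0 : Matrix.toEuclideanLin A = 0 := by
    apply LinearMap.ext; intro x
    ext i
    exact isEmptyElim i
  rw [specNorm, h0, map_zero, norm_zero]

lemma specNorm_pos [Nonempty (Fin n)] {M : Matrix (Fin n) (Fin n) ℝ} (h : IsUnit M) :
    0 < specNorm M := by
  rw [specNorm, norm_pos_iff]
  intro hz
  have hM0 : Matrix.toEuclideanLin M = 0 := (LinearEquiv.map_eq_zero_iff _).mp hz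
  have hM : M = 0 := (LinearEquiv.map_eq_zero_iff _).mp hM0
  rw [hM] at h
  rcases isUnit_iff_exists.mp h with ⟨B, hB, -⟩
  rw [zero_mul] at hB
  have : (1 : Matrix (Fin n) (Fin n) ℝ) ≠ 0 := one_ne_zero
  exact this hB.symm

end Stmt6Aux

set_option maxHeartbeats 2000000 in
/-- under the smallness condition on `‖E‖₂`,
`κ(AᵀW⁻¹A, ÃᵀW⁻¹Ã) ≤ (1 + (1+κ)‖E‖₂ + κ‖E‖₂²)/(1 − (1+κ)‖E‖₂ − κ‖E‖₂²)`,
where `κ(D, C) = λ_max(C⁻¹D)/λ_min(C⁻¹D)` and `κ = κ₂(W)`. -/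
theorem stmt6 {n : ℕ} (A Atil W : Matrix (Fin n) (Fin n) ℝ)
    (hA : IsUnit A) (hAtil : IsUnit Atil) (hW : W.PosDef)
    (E : Matrix (Fin n) (Fin n) ℝ) (hE : E = A * Atil⁻¹ - 1)
    (κ : ℝ) (hκ : κ = specNorm W * specNorm W⁻¹)
    (hsmall : specNorm E <
      (-(1 + κ) + Real.sqrt ((1 + κ) ^ 2 + 4 * κ)) / (2 * κ)) :
    sSup (spectrum ℝ ((Atilᵀ * W⁻¹ * Atil)⁻¹ * (Aᵀ * W⁻¹ * A))) /
        sInf (spectrum ℝ ((Atilᵀ * W⁻¹ * Atil)⁻¹ * (Aᵀ * W⁻¹ * A))) ≤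
      (1 + (1 + κ) * specNorm E + κ * specNorm E ^ 2) /
        (1 - (1 + κ) * specNorm E - κ * specNorm E ^ 2) := by
  have hεnn : (0:ℝ) ≤ specNorm E := norm_nonneg _
  rcases isEmpty_or_nonempty (Fin n) with hemp | hne
  · exfalso
    have hκ0 : κ = 0 := by
      rw [hκ, Stmt6Aux.specNorm_of_isEmpty, zero_mul]
    rw [hκ0] at hsmall
    norm_num [Real.sqrt_one] at hsmall
    linarith
  -- Nonempty case
  have hκpos : 0 < κ := by
    rw [hκ]
    exact mul_pos (Stmt6Aux.specNorm_pos hW.isUnit) (Stmt6Aux.specNorm_pos hW.inv.isUnit)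
  have hWinn : (0:ℝ) ≤ specNorm W⁻¹ := norm_nonneg _
  have hWnn : (0:ℝ) ≤ specNorm W := norm_nonneg _
  -- positivity of the denominator
  have hs2 : Real.sqrt ((1+κ)^2 + 4*κ) ^ 2 = (1+κ)^2 + 4*κ := Real.sq_sqrt (by positivity)
  have hsnn := Real.sqrt_nonneg ((1+κ)^2 + 4*κ)
  have h2' : specNorm E * (2*κ) < -(1+κ) + Real.sqrt ((1+κ)^2+4*κ) :=
    (lt_div_iff₀ (by positivity)).mp hsmall
  have hX : (0:ℝ) < 2*κ*specNorm E + (1+κ) := by nlinarith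
  have h4s : 2*κ*specNorm E + (1+κ) < Real.sqrt ((1+κ)^2+4*κ) := by linarith
  have h5s : (2*κ*specNorm E + (1+κ))^2 < Real.sqrt ((1+κ)^2+4*κ)^2 :=
    pow_lt_pow_left₀ h4s hX.le (by norm_num)
  have hlpos : 0 < 1 - ((1+κ)*specNorm E + κ*specNorm E^2) := by nlinarith [h5s, hs2, hκpos]
  have hβnn : 0 ≤ (1+κ)*specNorm E + κ*specNorm E^2 := by nlinarith [sq_nonneg (specNorm E)]
  -- symmetric matrices
  have hS : (W⁻¹).PosDef := hW.inv
  have hSsym : (W⁻¹)ᵀ = W⁻¹ := Stmt6Aux.herm_transpose hS.isHermitian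
  have hdetAtil : IsUnit Atil.det := (Matrix.isUnit_iff_isUnit_det _).mp hAtil
  have hA_eq : A = (1 + E) * Atil := by
    rw [hE]
    have h1 : (1 : Matrix (Fin n) (Fin n) ℝ) + (A * Atil⁻¹ - 1) = A * Atil⁻¹ := by abel
    rw [h1, Matrix.nonsing_inv_mul_cancel_right _ _ hdetAtil]
  have quad : ∀ (M : Matrix (Fin n) (Fin n) ℝ) (y : Fin n → ℝ),
      y ⬝ᵥ ((Mᵀ * W⁻¹ * M) *ᵥ y) = (M *ᵥ y) ⬝ᵥ (W⁻¹ *ᵥ (M *ᵥ y)) := by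
    intro M y
    have h1 : (Mᵀ * W⁻¹ * M) *ᵥ y = Mᵀ *ᵥ (W⁻¹ *ᵥ (M *ᵥ y)) := by
      rw [← Matrix.mulVec_mulVec, ← Matrix.mulVec_mulVec]
    rw [h1, Matrix.dotProduct_mulVec, Matrix.vecMul_transpose]
  -- key pointwise bound
  have hkey : ∀ y : Fin n → ℝ,
      |y ⬝ᵥ ((Aᵀ * W⁻¹ * A) *ᵥ y) - y ⬝ᵥ ((Atilᵀ * W⁻¹ * Atil) *ᵥ y)| ≤
        ((1+κ)*specNorm E + κ*specNorm E^2) * (y ⬝ᵥ ((Atilᵀ * W⁻¹ * Atil) *ᵥ y)) := by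
    intro y
    have hCy : y ⬝ᵥ ((Atilᵀ * W⁻¹ * Atil) *ᵥ y) = (Atil *ᵥ y) ⬝ᵥ (W⁻¹ *ᵥ (Atil *ᵥ y)) :=
      quad Atil y
    have hAy : A *ᵥ y = Atil *ᵥ y + E *ᵥ (Atil *ᵥ y) := by
      conv_lhs => rw [hA_eq]
      rw [← Matrix.mulVec_mulVec, Matrix.add_mulVec, Matrix.one_mulVec]
    have hsymm : (E *ᵥ (Atil *ᵥ y)) ⬝ᵥ (W⁻¹ *ᵥ (Atil *ᵥ y)) =
        (Atil *ᵥ y) ⬝ᵥ (W⁻¹ *ᵥ (E *ᵥ (Atil *ᵥ y))) := by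
      rw [Matrix.dotProduct_mulVec]
      nth_rewrite 1 [← hSsym]
      rw [Matrix.vecMul_transpose, dotProduct_comm]
    have hDy : y ⬝ᵥ ((Aᵀ * W⁻¹ * A) *ᵥ y) =
        (Atil *ᵥ y) ⬝ᵥ (W⁻¹ *ᵥ (Atil *ᵥ y)) +
        2 * ((Atil *ᵥ y) ⬝ᵥ (W⁻¹ *ᵥ (E *ᵥ (Atil *ᵥ y)))) +
        (E *ᵥ (Atil *ᵥ y)) ⬝ᵥ (W⁻¹ *ᵥ (E *ᵥ (Atil *ᵥ y))) := by
      rw [quad A y, hAy, Matrix.mulVec_add, add_dotProduct, dotProduct_add,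
        dotProduct_add, hsymm]
      ring
    set z := Atil *ᵥ y with hzdef
    set w := E *ᵥ z with hwdef
    have ht0 : 0 ≤ z ⬝ᵥ (W⁻¹ *ᵥ z) := by simpa using hS.posSemidef.dotProduct_mulVec_nonneg z
    have he20 : 0 ≤ w ⬝ᵥ (W⁻¹ *ᵥ w) := by simpa using hS.posSemidef.dotProduct_mulVec_nonneg w
    have he2 : w ⬝ᵥ (W⁻¹ *ᵥ w) ≤ κ * specNorm E^2 * (z ⬝ᵥ (W⁻¹ *ᵥ z)) := by
      have h1 := Stmt6Aux.dot_mulVec_le W⁻¹ w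
      have h2 := Stmt6Aux.mulVec_dot_le E z
      have h3 := Stmt6Aux.dot_le_specNorm_mul hW z
      calc w ⬝ᵥ (W⁻¹ *ᵥ w) ≤ specNorm W⁻¹ * (w ⬝ᵥ w) := h1
        _ ≤ specNorm W⁻¹ * (specNorm E^2 * (z ⬝ᵥ z)) := by
            exact mul_le_mul_of_nonneg_left h2 hWinn
        _ ≤ specNorm W⁻¹ * (specNorm E^2 * (specNorm W * (z ⬝ᵥ (W⁻¹ *ᵥ z)))) := by
            exact mul_le_mul_of_nonneg_left
              (mul_le_mul_of_nonneg_left h3 (sq_nonneg _)) hWinn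
        _ = κ * specNorm E^2 * (z ⬝ᵥ (W⁻¹ *ᵥ z)) := by rw [hκ]; ring
    have hcr2 : (z ⬝ᵥ (W⁻¹ *ᵥ w))^2 ≤ (z ⬝ᵥ (W⁻¹ *ᵥ z)) * (w ⬝ᵥ (W⁻¹ *ᵥ w)) :=
      Stmt6Aux.psd_cauchy hS.posSemidef z w
    have hcr : 2*|z ⬝ᵥ (W⁻¹ *ᵥ w)| ≤ (1+κ) * specNorm E * (z ⬝ᵥ (W⁻¹ *ᵥ z)) := by
      have h4 : (z ⬝ᵥ (W⁻¹ *ᵥ w))^2 ≤ κ * specNorm E^2 * (z ⬝ᵥ (W⁻¹ *ᵥ z))^2 := by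
        nlinarith [hcr2, he2, ht0]
      have h5 : (2*|z ⬝ᵥ (W⁻¹ *ᵥ w)|)^2 ≤ ((1+κ) * specNorm E * (z ⬝ᵥ (W⁻¹ *ᵥ z)))^2 := by
        rw [mul_pow, sq_abs]
        nlinarith [h4, sq_nonneg (1-κ), sq_nonneg (specNorm E * (z ⬝ᵥ (W⁻¹ *ᵥ z)))]
      have h6 : 0 ≤ (1+κ) * specNorm E * (z ⬝ᵥ (W⁻¹ *ᵥ z)) :=
        mul_nonneg (mul_nonneg (by linarith) hεnn) ht0
      nlinarith [h5, h6, abs_nonneg (z ⬝ᵥ (W⁻¹ *ᵥ w))]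
    rw [hDy, hCy]
    have hle := le_abs_self (z ⬝ᵥ (W⁻¹ *ᵥ w))
    have hge := neg_abs_le (z ⬝ᵥ (W⁻¹ *ᵥ w))
    rw [abs_le]
    constructor <;> nlinarith [he2, he20, hcr, ht0]
  -- PSD matrices
  have hCpsd : (Atilᵀ * W⁻¹ * Atil).PosSemidef := by
    have h := hS.posSemidef.conjTranspose_mul_mul_same Atil
    rwa [Matrix.conjTranspose_eq_transpose_of_trivial] at h
  have hDpsd : (Aᵀ * W⁻¹ * A).PosSemidef := by
    have h := hS.posSemidef.conjTranspose_mul_mul_same A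
    rwa [Matrix.conjTranspose_eq_transpose_of_trivial] at h
  have hCsym : (Atilᵀ * W⁻¹ * Atil)ᵀ = Atilᵀ * W⁻¹ * Atil := Stmt6Aux.herm_transpose hCpsd.1
  have hDsym : (Aᵀ * W⁻¹ * A)ᵀ = Aᵀ * W⁻¹ * A := Stmt6Aux.herm_transpose hDpsd.1
  have hPSDu : ((1 + ((1+κ)*specNorm E + κ*specNorm E^2)) • (Atilᵀ * W⁻¹ * Atil)
      - (Aᵀ * W⁻¹ * A)).PosSemidef := by
    refine Matrix.PosSemidef.of_dotProduct_mulVec_nonneg ?_ ?_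
    · show _ᴴ = _
      rw [Matrix.conjTranspose_eq_transpose_of_trivial, Matrix.transpose_sub,
        Matrix.transpose_smul, hCsym, hDsym]
    · intro x
      have hk := abs_le.mp (hkey x)
      have hc := hCpsd.dotProduct_mulVec_nonneg x
      simp only [star_trivial, Matrix.sub_mulVec, Matrix.smul_mulVec,
        dotProduct_sub, dotProduct_smul, smul_eq_mul] at *
      nlinarith [hk.1, hk.2, hc]
  have hPSDl : ((Aᵀ * W⁻¹ * A)
      - (1 - ((1+κ)*specNorm E + κ*specNorm E^2)) • (Atilᵀ * W⁻¹ * Atil)).PosSemidef := by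
    refine Matrix.PosSemidef.of_dotProduct_mulVec_nonneg ?_ ?_
    · show _ᴴ = _
      rw [Matrix.conjTranspose_eq_transpose_of_trivial, Matrix.transpose_sub,
        Matrix.transpose_smul, hCsym, hDsym]
    · intro x
      have hk := abs_le.mp (hkey x)
      have hc := hCpsd.dotProduct_mulVec_nonneg x
      simp only [star_trivial, Matrix.sub_mulVec, Matrix.smul_mulVec,
        dotProduct_sub, dotProduct_smul, smul_eq_mul] at *
      nlinarith [hk.1, hk.2, hc]
  -- C is positive definite
  have hCpd : (Atilᵀ * W⁻¹ * Atil).PosDef := by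
    refine Matrix.PosDef.of_dotProduct_mulVec_pos hCpsd.1 (fun x hx => ?_)
    have hz : Atil *ᵥ x ≠ 0 := by
      intro h0
      apply hx
      have hxx : Atil⁻¹ *ᵥ (Atil *ᵥ x) = x := by
        rw [Matrix.mulVec_mulVec, Matrix.nonsing_inv_mul _ hdetAtil, Matrix.one_mulVec]
      rw [← hxx, h0, Matrix.mulVec_zero]
    have hpos := hS.dotProduct_mulVec_pos hz
    simp only [star_trivial] at hpos ⊢
    rw [quad Atil x]
    exact hpos
  -- square root of C
  have hRcpsd := hCpd.posSemidef.posSemidef_sqrt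
  set Rc := hCpd.posSemidef.sqrt with hRc
  have hRcRc : Rc * Rc = Atilᵀ * W⁻¹ * Atil := hCpd.posSemidef.sqrt_mul_self
  have hdetRc : IsUnit Rc.det := Stmt6Aux.sqrt_isUnit_det hCpd
  have hRcUnit : IsUnit Rc := (Matrix.isUnit_iff_isUnit_det _).mpr hdetRc
  have h1 : Rc⁻¹ * Rc = 1 := Matrix.nonsing_inv_mul _ hdetRc
  have h2 : Rc * Rc⁻¹ = 1 := Matrix.mul_nonsing_inv _ hdetRc
  have hone : Rc⁻¹ * (Atilᵀ * W⁻¹ * Atil) * Rc⁻¹ = 1 := by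
    rw [← hRcRc]
    simp only [Matrix.mul_assoc]
    rw [h2, Matrix.mul_one, h1]
  have hconj : (Atilᵀ * W⁻¹ * Atil)⁻¹ * (Aᵀ * W⁻¹ * A) =
      Rc⁻¹ * (Rc⁻¹ * (Aᵀ * W⁻¹ * A) * Rc⁻¹) * Rc := by
    rw [← hRcRc, Matrix.mul_inv_rev]
    simp only [Matrix.mul_assoc]
    rw [h1, Matrix.mul_one]
  have hspec_eq : spectrum ℝ ((Atilᵀ * W⁻¹ * Atil)⁻¹ * (Aᵀ * W⁻¹ * A)) =
      spectrum ℝ (Rc⁻¹ * (Aᵀ * W⁻¹ * A) * Rc⁻¹) := by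
    have hu : (hRcUnit.unit : Matrix (Fin n) (Fin n) ℝ) = Rc := hRcUnit.unit_spec
    have hui : ((hRcUnit.unit⁻¹ : (Matrix (Fin n) (Fin n) ℝ)ˣ) : Matrix (Fin n) (Fin n) ℝ)
        = Rc⁻¹ := by rw [Matrix.coe_units_inv, hu]
    have hsc := spectrum.units_conjugate' (R := ℝ)
      (a := Rc⁻¹ * (Aᵀ * W⁻¹ * A) * Rc⁻¹) (u := hRcUnit.unit)
    rw [hui, hu] at hsc
    rw [hconj]
    exact hsc
  have hherm : (Rc⁻¹)ᴴ = Rc⁻¹ := by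
    rw [Matrix.conjTranspose_nonsing_inv, hRcpsd.1]
  have hM'u : ((1 + ((1+κ)*specNorm E + κ*specNorm E^2)) • (1 : Matrix (Fin n) (Fin n) ℝ)
      - Rc⁻¹ * (Aᵀ * W⁻¹ * A) * Rc⁻¹).PosSemidef := by
    have h := hPSDu.mul_mul_conjTranspose_same Rc⁻¹
    rw [hherm] at h
    have hexp : Rc⁻¹ * ((1 + ((1+κ)*specNorm E + κ*specNorm E^2)) • (Atilᵀ * W⁻¹ * Atil)
        - (Aᵀ * W⁻¹ * A)) * Rc⁻¹ =
        (1 + ((1+κ)*specNorm E + κ*specNorm E^2)) • (1 : Matrix (Fin n) (Fin n) ℝ)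
        - Rc⁻¹ * (Aᵀ * W⁻¹ * A) * Rc⁻¹ := by
      rw [Matrix.mul_sub, Matrix.sub_mul, mul_smul_comm, smul_mul_assoc, hone]
    rwa [hexp] at h
  have hM'l : (Rc⁻¹ * (Aᵀ * W⁻¹ * A) * Rc⁻¹
      - (1 - ((1+κ)*specNorm E + κ*specNorm E^2)) • (1 : Matrix (Fin n) (Fin n) ℝ)).PosSemidef := by
    have h := hPSDl.mul_mul_conjTranspose_same Rc⁻¹
    rw [hherm] at h
    have hexp : Rc⁻¹ * ((Aᵀ * W⁻¹ * A)
        - (1 - ((1+κ)*specNorm E + κ*specNorm E^2)) • (Atilᵀ * W⁻¹ * Atil)) * Rc⁻¹ =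
        Rc⁻¹ * (Aᵀ * W⁻¹ * A) * Rc⁻¹
        - (1 - ((1+κ)*specNorm E + κ*specNorm E^2)) • (1 : Matrix (Fin n) (Fin n) ℝ) := by
      rw [Matrix.mul_sub, Matrix.sub_mul, mul_smul_comm, smul_mul_assoc, hone]
    rwa [hexp] at h
  -- spectrum bounds
  have hbound : ∀ lam ∈ spectrum ℝ (Rc⁻¹ * (Aᵀ * W⁻¹ * A) * Rc⁻¹),
      (1 - ((1+κ)*specNorm E + κ*specNorm E^2)) ≤ lam ∧
      lam ≤ (1 + ((1+κ)*specNorm E + κ*specNorm E^2)) := by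
    intro lam hlam
    rw [spectrum.mem_iff] at hlam
    rw [Algebra.algebraMap_eq_smul_one] at hlam
    have hdet0 : (lam • (1 : Matrix (Fin n) (Fin n) ℝ)
        - Rc⁻¹ * (Aᵀ * W⁻¹ * A) * Rc⁻¹).det = 0 := by
      by_contra hd
      exact hlam ((Matrix.isUnit_iff_isUnit_det _).mpr (isUnit_iff_ne_zero.mpr hd))
    obtain ⟨v, hv0, hv⟩ := (Matrix.exists_mulVec_eq_zero_iff).mpr hdet0
    have hMv : (Rc⁻¹ * (Aᵀ * W⁻¹ * A) * Rc⁻¹) *ᵥ v = lam • v := by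
      have h3 := hv
      rw [Matrix.sub_mulVec, Matrix.smul_mulVec, Matrix.one_mulVec, sub_eq_zero] at h3
      exact h3.symm
    have hvv : 0 < v ⬝ᵥ v :=
      lt_of_le_of_ne (Stmt6Aux.dot_self_nonneg v)
        (fun h => hv0 (dotProduct_self_eq_zero.mp h.symm))
    constructor
    · have h4 := hM'l.dotProduct_mulVec_nonneg v
      simp only [star_trivial, Matrix.sub_mulVec, Matrix.smul_mulVec, Matrix.one_mulVec,
        dotProduct_sub, dotProduct_smul, smul_eq_mul, hMv] at h4
      nlinarith [h4, hvv]
    · have h4 := hM'u.dotProduct_mulVec_nonneg v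
      simp only [star_trivial, Matrix.sub_mulVec, Matrix.smul_mulVec, Matrix.one_mulVec,
        dotProduct_sub, dotProduct_smul, smul_eq_mul, hMv] at h4
      nlinarith [h4, hvv]
  -- nonemptiness
  have hM'psd : (Rc⁻¹ * (Aᵀ * W⁻¹ * A) * Rc⁻¹).PosSemidef := by
    have h := hDpsd.mul_mul_conjTranspose_same Rc⁻¹
    rwa [hherm] at h
  obtain ⟨i0⟩ := hne
  have hmem0 := hM'psd.1.eigenvalues_mem_spectrum_real i0
  have hnonempty : (spectrum ℝ ((Atilᵀ * W⁻¹ * Atil)⁻¹ * (Aᵀ * W⁻¹ * A))).Nonempty :=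
    ⟨_, by rw [hspec_eq]; exact hmem0⟩
  have hub : sSup (spectrum ℝ ((Atilᵀ * W⁻¹ * Atil)⁻¹ * (Aᵀ * W⁻¹ * A))) ≤
      1 + ((1+κ)*specNorm E + κ*specNorm E^2) :=
    csSup_le hnonempty (fun lam hl => (hbound lam (by rw [← hspec_eq]; exact hl)).2)
  have hlb : 1 - ((1+κ)*specNorm E + κ*specNorm E^2) ≤
      sInf (spectrum ℝ ((Atilᵀ * W⁻¹ * Atil)⁻¹ * (Aᵀ * W⁻¹ * A))) :=
    le_csInf hnonempty (fun lam hl => (hbound lam (by rw [← hspec_eq]; exact hl)).1)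
  have final := div_le_div₀ (by nlinarith : (0:ℝ) ≤ 1 + ((1+κ)*specNorm E + κ*specNorm E^2))
    hub hlpos hlb
  have e1 : 1 + (1+κ)*specNorm E + κ*specNorm E^2
      = 1 + ((1+κ)*specNorm E + κ*specNorm E^2) := by ring
  have e2 : 1 - (1+κ)*specNorm E - κ*specNorm E^2
      = 1 - ((1+κ)*specNorm E + κ*specNorm E^2) := by ring
  rw [e1, e2]
  exact final
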